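/- Let H be a symmetric positive definite real n×n matrix, B a symmetric positive definite real n×n matrix, and α a real number. Set C = α H^{1/2} B⁻¹ H^{1/2}, and define the linear operators Φ(X) = X − α(B⁻¹HX + (B⁻¹HX)ᵀ) and Ψ(Y) = Y − (CY + (CY)ᵀ) on n×n matrices. Then for every n×n matrix X and every natural number k, H^{1/2} · Φ^k(X) · H^{1/2} = Ψ^k( H^{1/2} X H^{1/2} ), where Φ^k and Ψ^k denote k-fold iteration. -/

import Mathlib

set_option maxHeartbeats 1000000


open Matrix

section

open scoped ComplexOrder

/-- The positive semidefinite square root of a positive semidefinite matrix, as defined in the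
older Mathlib (removed since). -/
noncomputable def Matrix.PosSemidef.sqrt {𝕜 : Type*} [RCLike 𝕜] {n : Type*} [Fintype n]
    [DecidableEq n] {A : Matrix n n 𝕜} (hA : A.PosSemidef) : Matrix n n 𝕜 :=
  hA.1.eigenvectorUnitary.1 * diagonal ((↑) ∘ (√·) ∘ hA.1.eigenvalues) *
  (star hA.1.eigenvectorUnitary : Matrix n n 𝕜)

end

lemma sqrt_conj_step {n : ℕ} (S Bi X : Matrix (Fin n) (Fin n) ℝ) (α : ℝ)
    (hS : Sᵀ = S) (hBi : Biᵀ = Bi) :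
    S * (X - α • (Bi * (S * S) * X + (Bi * (S * S) * X)ᵀ)) * S
      = S * X * S - ((α • (S * Bi * S)) * (S * X * S) +
          ((α • (S * Bi * S)) * (S * X * S))ᵀ) := by
  simp only [Matrix.transpose_mul, Matrix.transpose_smul, hS, hBi, Matrix.mul_sub,
    Matrix.sub_mul, Matrix.mul_add, Matrix.add_mul, Matrix.mul_smul, Matrix.smul_mul,
    smul_add, mul_assoc]

/-- With `H`, `B` symmetric positive definite, `C = α H^{1/2} B⁻¹ H^{1/2}`,
`Φ(X) = X − α(B⁻¹HX + (B⁻¹HX)ᵀ)` and `Ψ(Y) = Y − (CY + (CY)ᵀ)`, we have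
`H^{1/2} Φ^k(X) H^{1/2} = Ψ^k (H^{1/2} X H^{1/2})` for all `X` and `k`. -/
theorem sqrt_conjugation_of_iterates {n : ℕ} (H B : Matrix (Fin n) (Fin n) ℝ) (α : ℝ)
    (hH : H.PosDef) (hB : B.PosDef) :
    ∀ (X : Matrix (Fin n) (Fin n) ℝ) (k : ℕ),
      hH.posSemidef.sqrt *
          ((fun Y => Y - α • (B⁻¹ * H * Y + (B⁻¹ * H * Y)ᵀ))^[k] X) * hH.posSemidef.sqrt
        = (fun Y =>
              Y - ((α • (hH.posSemidef.sqrt * B⁻¹ * hH.posSemidef.sqrt)) * Y +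
                ((α • (hH.posSemidef.sqrt * B⁻¹ * hH.posSemidef.sqrt)) * Y)ᵀ))^[k]
            (hH.posSemidef.sqrt * X * hH.posSemidef.sqrt) := by
  intro X k
  induction k generalizing X with
  | zero => simp
  | succ k ih =>
    set S := hH.posSemidef.sqrt with hSdef
    have hS : Sᵀ = S := by
      have hst : ∀ M : Matrix (Fin n) (Fin n) ℝ, star M = Mᵀ := fun M => by
        rw [Matrix.star_eq_conjTranspose, Matrix.conjTranspose_eq_transpose_of_trivial]
      rw [hSdef, Matrix.PosSemidef.sqrt, hst, Matrix.transpose_mul, Matrix.transpose_mul,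
        Matrix.transpose_transpose, Matrix.diagonal_transpose, mul_assoc]
    have hSS : S * S = H := by
      have hU := Unitary.coe_star_mul_self hH.posSemidef.1.eigenvectorUnitary
      rw [hSdef, Matrix.PosSemidef.sqrt]
      conv_rhs => rw [hH.posSemidef.1.spectral_theorem, Unitary.conjStarAlgAut_apply]
      have hD : diagonal ((RCLike.ofReal : ℝ → ℝ) ∘ (√·) ∘ hH.posSemidef.1.eigenvalues) *
          diagonal ((RCLike.ofReal : ℝ → ℝ) ∘ (√·) ∘ hH.posSemidef.1.eigenvalues) =
          diagonal (RCLike.ofReal ∘ hH.posSemidef.1.eigenvalues :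
            Fin n → ℝ) := by
        rw [Matrix.diagonal_mul_diagonal]
        congr 1
        funext i
        simp [Real.mul_self_sqrt (hH.posSemidef.eigenvalues_nonneg i)]
      calc _ = (hH.posSemidef.1.eigenvectorUnitary.1 *
            (diagonal ((RCLike.ofReal : ℝ → ℝ) ∘ (√·) ∘ hH.posSemidef.1.eigenvalues) *
            ((star hH.posSemidef.1.eigenvectorUnitary : Matrix (Fin n) (Fin n) ℝ) *
              hH.posSemidef.1.eigenvectorUnitary.1) *
            diagonal ((RCLike.ofReal : ℝ → ℝ) ∘ (√·) ∘ hH.posSemidef.1.eigenvalues))) *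
            (star hH.posSemidef.1.eigenvectorUnitary : Matrix (Fin n) (Fin n) ℝ) := by
              simp only [mul_assoc]
        _ = _ := by rw [hU, Matrix.mul_one, hD]
    have hBi : (B⁻¹)ᵀ = B⁻¹ := by
      rw [Matrix.transpose_nonsing_inv]
      congr 1
      simpa using hB.isHermitian.eq
    rw [Function.iterate_succ_apply, Function.iterate_succ_apply, ih]
    congr 1
    calc S * (X - α • (B⁻¹ * H * X + (B⁻¹ * H * X)ᵀ)) * S
        = S * (X - α • (B⁻¹ * (S * S) * X + (B⁻¹ * (S * S) * X)ᵀ)) * S := by rw [hSS]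
      _ = S * X * S - ((α • (S * B⁻¹ * S)) * (S * X * S) +
            ((α • (S * B⁻¹ * S)) * (S * X * S))ᵀ) := sqrt_conj_step S B⁻¹ X α hS hBi
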